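/- For every real number x > 0, the series ∑_{k=1}^{∞} (k−1)! / ((x+1)(x+2)⋯(x+k)) converges and its sum equals 1/x. -/

import Mathlib

open Finset Filter

private lemma prod_one_add_ge (f : ℕ → ℝ) (hf : ∀ i, 0 ≤ f i) (n : ℕ) :
    1 + ∑ i ∈ range n, f i ≤ ∏ i ∈ range n, (1 + f i) := by
  induction n with
  | zero => simp
  | succ n ih =>
    rw [Finset.sum_range_succ, Finset.prod_range_succ]
    have h1 : 0 ≤ ∑ i ∈ range n, f i := Finset.sum_nonneg fun i _ => hf i
    nlinarith [hf n, mul_nonneg h1 (hf n)]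

/-- For every real `x > 0`, `∑_{k=1}^∞ (k-1)! / ((x+1)(x+2)⋯(x+k)) = 1/x`
(the series, reindexed by `k ↦ k+1`, sums to `1/x`). -/
theorem stmt8 (x : ℝ) (hx : 0 < x) :
    HasSum (fun k : ℕ => (Nat.factorial k : ℝ) / ∏ i ∈ Finset.range (k + 1), (x + (i + 1)))
      (1 / x) := by
  set b : ℕ → ℝ := fun n => (Nat.factorial n : ℝ) / ∏ i ∈ range n, (x + (i + 1)) with hb
  have hP : ∀ n, 0 < ∏ i ∈ range n, (x + (i + 1)) := by
    intro n
    apply Finset.prod_pos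
    intro i _
    positivity
  have hbpos : ∀ n, 0 < b n := by
    intro n
    exact div_pos (by positivity) (hP n)
  -- each term equals (b k - b (k+1))/x
  have hterm : ∀ k : ℕ, (Nat.factorial k : ℝ) / ∏ i ∈ range (k + 1), (x + (i + 1))
      = (b k - b (k + 1)) / x := by
    intro k
    have hPk := (hP k).ne'
    have hPk1 := (hP (k + 1)).ne'
    simp only [hb]
    rw [Finset.prod_range_succ, Nat.factorial_succ]
    field_simp
    push_cast
    ring
  -- b n = (∏ (1 + x/(i+1)))⁻¹
  have hbinv : ∀ n, b n = (∏ i ∈ range n, (1 + x / (i + 1)))⁻¹ := by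
    intro n
    have : ∏ i ∈ range n, (1 + x / (i + 1 : ℝ)) =
        (∏ i ∈ range n, (x + (i + 1))) / (Nat.factorial n : ℝ) := by
      rw [← Finset.prod_range_add_one_eq_factorial n]
      push_cast
      rw [← Finset.prod_div_distrib]
      apply Finset.prod_congr rfl
      intro i _
      have : (0:ℝ) < i + 1 := by positivity
      field_simp
      ring
    rw [this, hb]
    simp [div_eq_mul_inv, mul_comm]
  -- b n → 0
  have hb0 : Tendsto b atTop (nhds 0) := by
    have hmono : ∀ n, 1 + x * ∑ i ∈ range n, (1 / (i + 1) : ℝ) ≤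
        ∏ i ∈ range n, (1 + x / (i + 1)) := by
      intro n
      have := prod_one_add_ge (fun i => x / (i + 1)) (fun i => by positivity) n
      calc 1 + x * ∑ i ∈ range n, (1 / (i + 1) : ℝ)
          = 1 + ∑ i ∈ range n, x / (i + 1) := by
            rw [Finset.mul_sum]; congr 1; apply Finset.sum_congr rfl; intro i _; ring
        _ ≤ _ := this
    have hH : Tendsto (fun n => ∑ i ∈ range n, (1 / (i + 1) : ℝ)) atTop atTop := by
      have := Real.tendsto_sum_range_one_div_nat_succ_atTop
      simpa using this
    have hlin : Tendsto (fun n => 1 + x * ∑ i ∈ range n, (1 / (i + 1) : ℝ)) atTop atTop :=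
      tendsto_atTop_add_const_left _ 1 (hH.const_mul_atTop hx)
    have hprod : Tendsto (fun n => ∏ i ∈ range n, (1 + x / (i + 1) : ℝ)) atTop atTop :=
      tendsto_atTop_mono hmono hlin
    have : Tendsto (fun n => (∏ i ∈ range n, (1 + x / (i + 1) : ℝ))⁻¹) atTop (nhds 0) :=
      tendsto_inv_atTop_zero.comp hprod
    simpa [← hbinv] using this
  -- partial sums converge to 1/x
  rw [hasSum_iff_tendsto_nat_of_nonneg (fun k => by positivity)]
  have hsum : ∀ n, ∑ k ∈ range n,
      (Nat.factorial k : ℝ) / ∏ i ∈ range (k + 1), (x + (i + 1)) = (b 0 - b n) / x := by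
    intro n
    rw [← Finset.sum_range_sub' b n, Finset.sum_div]
    exact Finset.sum_congr rfl fun k _ => hterm k
  simp only [hsum]
  have hb0' : b 0 = 1 := by simp [hb]
  rw [hb0']
  have : Tendsto (fun n => (1 - b n) / x) atTop (nhds ((1 - 0) / x)) :=
    ((tendsto_const_nhds.sub hb0).div_const x)
  simpa using this
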